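/- Fix N ≥ 1 and σ ∈ {0,1}. For the truncated filamentation ODE d a_p/dt = i p ∑_{k+ℓ−m=p, 1≤k,ℓ,m≤N} (min(k,ℓ,m,p) − σ) a_k a_ℓ conj(a_m) on ℂ^N, the mass M(a) = ∑_{k=1}^N |a_k|²/k is conserved along any solution. -/

import Mathlib

open Finset Complex in
private lemma stmt_12_T_real (N σ : ℕ) (b : ℕ → ℂ) :
    (∑ p ∈ Finset.Icc 1 N,
      ∑ q ∈ Finset.Icc 1 N ×ˢ (Finset.Icc 1 N ×ˢ Finset.Icc 1 N),
        if q.1 + q.2.1 = q.2.2 + p then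
          (((min (min q.1 q.2.1) (min q.2.2 p) : ℕ) : ℂ) - (σ : ℂ))
            * b q.1 * b q.2.1 * (starRingEnd ℂ) (b q.2.2) * (starRingEnd ℂ) (b p)
        else 0).im = 0 := by
  rw [← Complex.conj_eq_iff_im, map_sum]
  simp only [map_sum]
  rw [← Finset.sum_product', ← Finset.sum_product']
  refine Finset.sum_nbij'
    (fun x => (x.2.2.1, (x.2.2.2, (x.1, x.2.1))))
    (fun x => (x.2.2.1, (x.2.2.2, (x.1, x.2.1)))) ?_ ?_ ?_ ?_ ?_
  · intro x hx
    simp only [Finset.mem_product] at hx ⊢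
    tauto
  · intro x hx
    simp only [Finset.mem_product] at hx ⊢
    tauto
  · intro x _; rfl
  · intro x _; rfl
  · rintro ⟨p, k, l, m⟩ _
    simp only [apply_ite (starRingEnd ℂ), map_zero, map_mul, map_sub, map_natCast,
      Complex.conj_conj]
    by_cases h : k + l = m + p
    · rw [if_pos h, if_pos h.symm]
      have hmin : min (min m p) (min k l) = min (min k l) (min m p) := min_comm _ _
      rw [hmin]
      ring
    · rw [if_neg h, if_neg (fun h' => h h'.symm)]

open Finset Complex in
private lemma stmt_12_term (k : ℕ) (a : ℝ → ℕ → ℂ) (t : ℝ) (hk1 : 1 ≤ k)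
    (S : ℝ → ℕ → ℂ)
    (hd : HasDerivAt (fun s : ℝ => a s k) (Complex.I * (k : ℂ) * S t k) t) :
    HasDerivAt (fun s : ℝ => ‖a s k‖ ^ 2 / (k : ℝ))
      (-2 * (S t k * (starRingEnd ℂ) (a t k)).im) t := by
  have hk0 : (k : ℝ) ≠ 0 := Nat.cast_ne_zero.mpr (by omega)
  have hcd : HasDerivAt (fun s : ℝ => (starRingEnd ℂ) (a s k))
      ((starRingEnd ℂ) (Complex.I * (k : ℂ) * S t k)) t := hd.star
  have hm := hd.mul hcd
  have hre := (Complex.reCLM.hasFDerivAt.comp_hasDerivAt t hm).div_const (k : ℝ)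
  have hfun : (fun s : ℝ => ‖a s k‖ ^ 2 / (k : ℝ))
      = fun s : ℝ => Complex.reCLM ((fun s : ℝ => a s k) s
          * (fun s : ℝ => (starRingEnd ℂ) (a s k)) s) / (k : ℝ) := by
    funext s
    simp only [Complex.reCLM_apply]
    rw [Complex.sq_norm, Complex.mul_conj, Complex.ofReal_re]
  rw [hfun]
  convert hre using 1
  · rfl
  · rfl
  · rfl
  simp only [Complex.reCLM_apply, map_mul, Complex.conj_I, Complex.add_re,
    Complex.mul_re, Complex.mul_im, Complex.conj_re, Complex.conj_im,
    Complex.I_re, Complex.I_im, Complex.natCast_re, Complex.natCast_im,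
    Complex.neg_re, Complex.neg_im]
  field_simp
  ring

/-- The mass `M(a) = ∑_{k=1}^N |a_k|²/k` is conserved along any solution of the
Galerkin-truncated filamentation equation. -/
theorem stmt_12 (N : ℕ) (hN : 1 ≤ N) (σ : ℕ) (hσ : σ = 0 ∨ σ = 1)
    (a : ℝ → ℕ → ℂ)
    (hODE : ∀ t : ℝ, ∀ p : ℕ, 1 ≤ p → p ≤ N →
      HasDerivAt (fun s : ℝ => a s p)
        (Complex.I * (p : ℂ) *
          ∑ q ∈ Finset.Icc 1 N ×ˢ (Finset.Icc 1 N ×ˢ Finset.Icc 1 N),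
            if q.1 + q.2.1 = q.2.2 + p then
              (((min (min q.1 q.2.1) (min q.2.2 p) : ℕ) : ℂ) - (σ : ℂ))
                * a t q.1 * a t q.2.1 * (starRingEnd ℂ) (a t q.2.2)
            else 0) t) :
    ∀ t s : ℝ,
      ∑ k ∈ Finset.Icc 1 N, ‖a t k‖ ^ 2 / (k : ℝ)
        = ∑ k ∈ Finset.Icc 1 N, ‖a s k‖ ^ 2 / (k : ℝ) := by
  set S : ℝ → ℕ → ℂ := fun t p =>
    ∑ q ∈ Finset.Icc 1 N ×ˢ (Finset.Icc 1 N ×ˢ Finset.Icc 1 N),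
      if q.1 + q.2.1 = q.2.2 + p then
        (((min (min q.1 q.2.1) (min q.2.2 p) : ℕ) : ℂ) - (σ : ℂ))
          * a t q.1 * a t q.2.1 * (starRingEnd ℂ) (a t q.2.2)
      else 0 with hS
  have hterm : ∀ t : ℝ, ∀ k ∈ Finset.Icc 1 N,
      HasDerivAt (fun s : ℝ => ‖a s k‖ ^ 2 / (k : ℝ))
        (-2 * (S t k * (starRingEnd ℂ) (a t k)).im) t := by
    intro t k hk
    rw [Finset.mem_Icc] at hk
    exact stmt_12_term k a t hk.1 S (hODE t k hk.1 hk.2)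
  have hmass : ∀ t : ℝ,
      HasDerivAt (fun s : ℝ => ∑ k ∈ Finset.Icc 1 N, ‖a s k‖ ^ 2 / (k : ℝ)) 0 t := by
    intro t
    have h := HasDerivAt.sum (fun k hk => hterm t k hk)
    have hz : (∑ k ∈ Finset.Icc 1 N, -2 * (S t k * (starRingEnd ℂ) (a t k)).im) = 0 := by
      rw [← Finset.mul_sum, ← Complex.im_sum]
      have hT : (∑ k ∈ Finset.Icc 1 N, S t k * (starRingEnd ℂ) (a t k)).im = 0 := by
        have hexp : ∀ k, S t k * (starRingEnd ℂ) (a t k)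
            = ∑ q ∈ Finset.Icc 1 N ×ˢ (Finset.Icc 1 N ×ˢ Finset.Icc 1 N),
              if q.1 + q.2.1 = q.2.2 + k then
                (((min (min q.1 q.2.1) (min q.2.2 k) : ℕ) : ℂ) - (σ : ℂ))
                  * a t q.1 * a t q.2.1 * (starRingEnd ℂ) (a t q.2.2)
                  * (starRingEnd ℂ) (a t k)
              else 0 := by
          intro k
          rw [hS]
          rw [Finset.sum_mul]
          refine Finset.sum_congr rfl fun q _ => ?_
          rw [ite_mul, zero_mul]
        simp only [hexp]
        exact stmt_12_T_real N σ (a t)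
      rw [hT, mul_zero]
    rw [hz] at h
    simpa only [Finset.sum_fn] using h
  intro t s
  exact is_const_of_deriv_eq_zero
    (fun x => (hmass x).differentiableAt)
    (fun x => (hmass x).deriv) t s
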